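/- Let ψ(t) = e_{1+(k mod d)} for t ∈ [kΔt, (k+1)Δt), k ∈ ℕ, where e_i are standard basis vectors of ℝ^d and Δt > 0. Then ψ is persistently exciting: for all t ≥ 0, ∫_t^{t+dΔt} ψ(s)ψ(s)ᵀ ds ≥ (Δt/2)·I_d and ∫_t^{t+dΔt} ψ(s)ψ(s)ᵀ ds ≤ 2Δt·I_d (in the positive semidefinite order). -/

import Mathlib

open MeasureTheory

lemma cycling_indicator_integral (d : ℕ) (Δt : ℝ) (hΔt : 0 < Δt) (i : Fin d) (t : ℝ) :
    ∫ s in t..t+d*Δt, (if (⌊s/Δt⌋ % (d:ℤ)) = ((i:ℕ):ℤ) then (1:ℝ) else 0) = Δt := by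
  set h : ℝ → ℝ := fun s => if (⌊s/Δt⌋ % (d:ℤ)) = ((i:ℕ):ℤ) then (1:ℝ) else 0 with hh
  have hper : Function.Periodic h ((d:ℝ)*Δt) := by
    intro s
    have h1 : ⌊(s + d*Δt)/Δt⌋ = ⌊s/Δt⌋ + d := by
      rw [add_div, mul_div_assoc, div_self hΔt.ne', mul_one]
      exact_mod_cast Int.floor_add_intCast (s/Δt) d
    have h2 : (⌊s/Δt⌋ + (d:ℤ)) % d = ⌊s/Δt⌋ % d := by
      simpa using Int.add_mul_emod_self_left ⌊s/Δt⌋ d 1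
    simp only [hh, h1, h2]
  rw [hper.intervalIntegral_add_eq t 0, zero_add]
  have hmeas : Measurable h := by
    apply Measurable.ite _ measurable_const measurable_const
    have : {a : ℝ | ⌊a/Δt⌋ % (d:ℤ) = ((i:ℕ):ℤ)}
        = (fun a : ℝ => ⌊a/Δt⌋) ⁻¹' {z : ℤ | z % d = ((i:ℕ):ℤ)} := rfl
    rw [this]
    exact ((measurable_id.div_const Δt).floor) MeasurableSet.of_discrete
  have hint : ∀ a b : ℝ, IntervalIntegrable h volume a b := by
    intro a b
    rw [intervalIntegrable_iff]
    refine Integrable.mono' (g := fun _ => (1:ℝ))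
      (integrableOn_const measure_Ioc_lt_top.ne) hmeas.aestronglyMeasurable ?_
    filter_upwards with x
    simp only [hh]
    split <;> norm_num
  have hsplit := intervalIntegral.sum_integral_adjacent_intervals
    (a := fun k : ℕ => (k:ℝ)*Δt) (n := d) (μ := volume) (f := h) (fun k _ => hint _ _)
  simp only [Nat.cast_zero, zero_mul] at hsplit
  rw [← hsplit]
  have piece : ∀ k : ℕ, (∫ s in ((k:ℝ)*Δt)..(((k+1:ℕ)):ℝ)*Δt, h s) =
      if (k % d : ℕ) = (i:ℕ) then Δt else 0 := by
    intro k
    have hc : (((k+1:ℕ)):ℝ) = (k:ℝ)+1 := by push_cast; ring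
    rw [hc]
    have hle : (k:ℝ)*Δt ≤ ((k:ℝ)+1)*Δt := by nlinarith
    rw [intervalIntegral.integral_of_le hle, integral_Ioc_eq_integral_Ioo]
    have heq : Set.EqOn h (fun _ => if (k % d : ℕ) = (i:ℕ) then (1:ℝ) else 0)
        (Set.Ioo ((k:ℝ)*Δt) (((k:ℝ)+1)*Δt)) := by
      intro s hs
      have hfl : ⌊s/Δt⌋ = k := by
        rw [Int.floor_eq_iff]
        constructor
        · push_cast; rw [le_div_iff₀ hΔt]; exact hs.1.le
        · push_cast; rw [div_lt_iff₀ hΔt]; exact hs.2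
      simp only [hh, hfl]
      have h3 : ((k:ℤ)) % (d:ℤ) = ((k % d : ℕ) : ℤ) := by omega
      rw [h3]
      by_cases hk : (k % d : ℕ) = (i:ℕ)
      · have h5 : (((k % d : ℕ)):ℤ) = ((i:ℕ):ℤ) := by exact_mod_cast hk
        rw [if_pos h5, if_pos hk]
      · have h5 : ¬ (((k % d : ℕ)):ℤ) = ((i:ℕ):ℤ) := by exact_mod_cast hk
        rw [if_neg h5, if_neg hk]
    rw [setIntegral_congr_fun measurableSet_Ioo heq]
    rw [setIntegral_const, Real.volume_real_Ioo]
    have h4 : ((k:ℝ)+1)*Δt - (k:ℝ)*Δt = Δt := by ring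
    rw [h4, max_eq_left hΔt.le]
    split <;> simp
  calc ∑ k ∈ Finset.range d, ∫ s in ((k:ℝ)*Δt)..(((k+1:ℕ)):ℝ)*Δt, h s
      = ∑ k ∈ Finset.range d, if k = (i:ℕ) then Δt else 0 := by
        apply Finset.sum_congr rfl
        intro k hk
        rw [piece k, Nat.mod_eq_of_lt (Finset.mem_range.mp hk)]
    _ = Δt := by rw [Finset.sum_ite_eq' (Finset.range d) (i:ℕ)]; simp [i.isLt]

lemma psd_smul_one (d : ℕ) (c : ℝ) (hc : 0 ≤ c) :
    Matrix.PosSemidef (c • (1 : Matrix (Fin d) (Fin d) ℝ)) := by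
  rw [Matrix.posSemidef_iff_dotProduct_mulVec]
  constructor
  · unfold Matrix.IsHermitian
    rw [Matrix.conjTranspose_smul, Matrix.conjTranspose_one]
    norm_num
  · intro x
    rw [Matrix.smul_mulVec, Matrix.one_mulVec, dotProduct_smul]
    exact mul_nonneg hc (dotProduct_star_self_nonneg x)

/-- The cycling coordinate signal `ψ(s) = e_{1 + (k mod d)}` for
`s ∈ [kΔt, (k+1)Δt)` is persistently exciting: over any window of length
`d·Δt` the matrix integral `∫ ψψᵀ` is bounded between `(Δt/2)·I` and
`2Δt·I` in the positive semidefinite (Loewner) order. -/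
theorem cycling_basis_persistently_exciting
    {d : ℕ} (hd : 0 < d) (Δt : ℝ) (hΔt : 0 < Δt)
    (ψ : ℝ → EuclideanSpace ℝ (Fin d))
    (hψ : ∀ k : ℕ, ∀ s ∈ Set.Ico ((k : ℝ) * Δt) ((k + 1 : ℝ) * Δt),
      ψ s = EuclideanSpace.single (⟨k % d, Nat.mod_lt k hd⟩ : Fin d) 1) :
    ∀ t : ℝ, 0 ≤ t →
      Matrix.PosSemidef
        ((Matrix.of fun i j : Fin d =>
          ∫ s in t..(t + d * Δt), ψ s i * ψ s j) - (Δt / 2) • (1 : Matrix (Fin d) (Fin d) ℝ)) ∧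
      Matrix.PosSemidef
        ((2 * Δt) • (1 : Matrix (Fin d) (Fin d) ℝ) -
          (Matrix.of fun i j : Fin d => ∫ s in t..(t + d * Δt), ψ s i * ψ s j)) := by
  -- ψ at nonnegative times
  have hpsi : ∀ s : ℝ, 0 ≤ s → ψ s = EuclideanSpace.single
      (⟨⌊s/Δt⌋₊ % d, Nat.mod_lt _ hd⟩ : Fin d) 1 := by
    intro s hs
    apply hψ ⌊s/Δt⌋₊
    have h0 : (0:ℝ) ≤ s/Δt := div_nonneg hs hΔt.le
    have hfle : (⌊s/Δt⌋₊:ℝ) ≤ s/Δt := Nat.floor_le h0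
    have hflt : s/Δt < (⌊s/Δt⌋₊:ℝ)+1 := Nat.lt_floor_add_one (s/Δt)
    have hsd : (s/Δt)*Δt = s := div_mul_cancel₀ s hΔt.ne'
    constructor
    · calc (⌊s/Δt⌋₊:ℝ)*Δt ≤ (s/Δt)*Δt := by nlinarith
        _ = s := hsd
    · calc s = (s/Δt)*Δt := hsd.symm
        _ < ((⌊s/Δt⌋₊:ℝ)+1)*Δt := by nlinarith
  have hdpos : (0:ℝ) < (d:ℝ)*Δt := by
    have : (0:ℝ) < (d:ℝ) := by exact_mod_cast hd
    nlinarith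
  -- the integral is exactly Δt·δᵢⱼ
  have key : ∀ (i j : Fin d) (t : ℝ), 0 ≤ t →
      (∫ s in t..(t + d * Δt), ψ s i * ψ s j) = if i = j then Δt else 0 := by
    intro i j t ht
    have hle : t ≤ t + d*Δt := by linarith
    have hs0 : ∀ s ∈ Set.uIcc t (t + d*Δt), 0 ≤ s := by
      rw [Set.uIcc_of_le hle]
      intro s hs
      exact le_trans ht hs.1
    by_cases hij : i = j
    · subst hij
      have hcong : (∫ s in t..(t + d * Δt), ψ s i * ψ s i)
          = ∫ s in t..(t + d * Δt),
            (if (⌊s/Δt⌋ % (d:ℤ)) = ((i:ℕ):ℤ) then (1:ℝ) else 0) := by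
        apply intervalIntegral.integral_congr
        intro s hs
        have hs' := hs0 s hs
        show ψ s i * ψ s i = _
        rw [hpsi s hs']
        simp only [EuclideanSpace.single_apply]
        have hfl : ⌊s/Δt⌋ = (⌊s/Δt⌋₊ : ℤ) :=
          (Int.natCast_floor_eq_floor (div_nonneg hs' hΔt.le)).symm
        have hiff : (i = (⟨⌊s/Δt⌋₊ % d, Nat.mod_lt _ hd⟩ : Fin d))
            ↔ (⌊s/Δt⌋ % (d:ℤ) = ((i:ℕ):ℤ)) := by
          rw [Fin.ext_iff, hfl]
          have hv : ((⟨⌊s/Δt⌋₊ % d, Nat.mod_lt _ hd⟩ : Fin d) : ℕ) = ⌊s/Δt⌋₊ % d := rfl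
          rw [hv]
          constructor <;> intro h <;> omega
        by_cases hc : i = (⟨⌊s/Δt⌋₊ % d, Nat.mod_lt _ hd⟩ : Fin d)
        · rw [if_pos hc, if_pos (hiff.mp hc)]; norm_num
        · rw [if_neg hc, if_neg (fun h => hc (hiff.mpr h))]; ring
      rw [if_pos rfl, hcong]
      exact cycling_indicator_integral d Δt hΔt i t
    · rw [if_neg hij]
      have hz : (∫ s in t..(t + d * Δt), ψ s i * ψ s j)
          = ∫ s in t..(t + d * Δt), (0:ℝ) := by
        apply intervalIntegral.integral_congr
        intro s hs
        show ψ s i * ψ s j = 0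
        rw [hpsi s (hs0 s hs)]
        simp only [EuclideanSpace.single_apply]
        split_ifs with h1 h2 <;> simp_all
      rw [hz]
      simp
  intro t ht
  have hM : (Matrix.of fun i j : Fin d => ∫ s in t..(t + d * Δt), ψ s i * ψ s j)
      = Δt • (1 : Matrix (Fin d) (Fin d) ℝ) := by
    ext i j
    simp only [Matrix.of_apply, Matrix.smul_apply, Matrix.one_apply, key i j t ht,
      smul_eq_mul]
    split_ifs <;> ring
  rw [hM]
  constructor
  · have h1 : Δt • (1 : Matrix (Fin d) (Fin d) ℝ) - (Δt / 2) • 1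
        = (Δt/2) • (1 : Matrix (Fin d) (Fin d) ℝ) := by
      rw [← sub_smul]; congr 1; ring
    rw [h1]
    exact psd_smul_one d _ (by linarith)
  · have h2 : (2 * Δt) • (1 : Matrix (Fin d) (Fin d) ℝ) - Δt • 1
        = Δt • (1 : Matrix (Fin d) (Fin d) ℝ) := by
      rw [← sub_smul]; congr 1; ring
    rw [h2]
    exact psd_smul_one d _ hΔt.le
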